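/- arXiv:1109.0326 — 4 statements merged into one kernel-verified Lean document; each statement's English description precedes it below -/
import Mathlib

section
/- As n → ∞, ‖p_n‖_∞ ∼ 2/(2π)^n; that is, lim_{n→∞} (2π)^n · max_{x∈[0,1]} |B_n(x)| / n! = 2. -/
open Filter Real

/-- The `n`-th Bernoulli polynomial, evaluated at a real number `x`. -/
noncomputable def bernPoly (n : ℕ) (x : ℝ) : ℝ :=
  Polynomial.aeval x (Polynomial.bernoulli n)

/-- The sup norm `‖g‖_∞ = max_{x∈[0,1]} |g(x)|`. -/
noncomputable def normInf (g : ℝ → ℝ) : ℝ :=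
  sSup ((fun x => |g x|) '' Set.Icc (0:ℝ) 1)

noncomputable def ZZ (n : ℕ) : ℝ := ∑' k : ℕ, 1 / (k : ℝ) ^ n

lemma summableZ {n : ℕ} (hn : 2 ≤ n) : Summable (fun k : ℕ => 1 / (k : ℝ) ^ n) :=
  Real.summable_one_div_nat_pow.mpr (by omega)

lemma summableT {n : ℕ} (hn : 2 ≤ n) : Summable (fun k : ℕ => 1 / ((k : ℝ) + 2) ^ n) := by
  have h := (summableZ hn).comp_injective (add_left_injective 2)
  refine h.congr (fun k => ?_)
  simp only [Function.comp]
  push_cast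
  ring_nf

lemma Z_eq {n : ℕ} (hn : 2 ≤ n) : ZZ n = 1 + ∑' k : ℕ, 1 / ((k : ℝ) + 2) ^ n := by
  have hs := summableZ hn
  have hs1 : Summable (fun k : ℕ => 1 / ((k : ℝ) + 1) ^ n) := by
    have h := hs.comp_injective (add_left_injective 1)
    refine h.congr (fun k => ?_)
    simp [Function.comp]
  rw [ZZ, Summable.tsum_eq_zero_add hs]
  have e1 : ∑' (b : ℕ), 1 / ((b + 1 : ℕ) : ℝ) ^ n = ∑' (b : ℕ), 1 / ((b : ℝ) + 1) ^ n :=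
    tsum_congr fun b => by push_cast; ring_nf
  rw [e1, Summable.tsum_eq_zero_add hs1]
  have e2 : ∑' (b : ℕ), 1 / (((b + 1 : ℕ) : ℝ) + 1) ^ n = ∑' (b : ℕ), 1 / ((b : ℝ) + 2) ^ n :=
    tsum_congr fun b => by push_cast; ring_nf
  rw [e2]
  simp [zero_pow (by omega : n ≠ 0)]

lemma Z_ge_one {n : ℕ} (hn : 2 ≤ n) : 1 ≤ ZZ n := by
  rw [Z_eq hn]
  have : 0 ≤ ∑' k : ℕ, 1 / ((k : ℝ) + 2) ^ n := tsum_nonneg (fun k => by positivity)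
  linarith

lemma Z_tendsto : Tendsto ZZ atTop (nhds 1) := by
  set T2 : ℝ := ∑' k : ℕ, 1 / ((k : ℝ) + 2) ^ 2 with hT2
  have hupper : ∀ n : ℕ, 2 ≤ n → ZZ n ≤ 1 + (1/2 : ℝ) ^ (n - 2) * T2 := by
    intro n hn
    rw [Z_eq hn]
    have hle : ∑' k : ℕ, 1 / ((k : ℝ) + 2) ^ n ≤ (1/2 : ℝ) ^ (n - 2) * T2 := by
      rw [hT2, ← tsum_mul_left]
      refine Summable.tsum_le_tsum (fun k => ?_) (summableT hn) ((summableT le_rfl).mul_left _)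
      obtain ⟨m, rfl⟩ : ∃ m, n = m + 2 := ⟨n - 2, by omega⟩
      have hk0 : (0:ℝ) ≤ (k : ℝ) := Nat.cast_nonneg k
      have h1 : (0:ℝ) < 2 ^ m * ((k:ℝ) + 2) ^ 2 := by positivity
      have h2 : (2:ℝ) ^ m * ((k:ℝ) + 2) ^ 2 ≤ ((k:ℝ) + 2) ^ (m + 2) := by
        rw [pow_add]
        exact mul_le_mul_of_nonneg_right (pow_le_pow_left₀ (by norm_num) (by linarith) m)
          (by positivity)
      calc 1 / ((k:ℝ) + 2) ^ (m + 2) ≤ 1 / (2 ^ m * ((k:ℝ) + 2) ^ 2) :=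
            one_div_le_one_div_of_le h1 h2
        _ = (1/2 : ℝ) ^ (m + 2 - 2) * (1 / ((k:ℝ) + 2) ^ 2) := by
            rw [Nat.add_sub_cancel, div_pow, one_pow]
            field_simp
    linarith
  have hub : Tendsto (fun n : ℕ => 1 + (1/2 : ℝ) ^ (n - 2) * T2) atTop (nhds 1) := by
    have h0 : Tendsto (fun n : ℕ => (1/2 : ℝ) ^ n) atTop (nhds 0) :=
      tendsto_pow_atTop_nhds_zero_of_lt_one (by norm_num) (by norm_num)
    have h1 : Tendsto (fun n : ℕ => (1/2 : ℝ) ^ (n - 2)) atTop (nhds 0) :=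
      h0.comp (tendsto_sub_atTop_nat 2)
    have := (h1.mul_const T2).const_add 1
    simpa using this
  refine tendsto_of_tendsto_of_tendsto_of_le_of_le' tendsto_const_nhds hub ?_ ?_
  · filter_upwards [eventually_ge_atTop 2] with n hn using Z_ge_one hn
  · filter_upwards [eventually_ge_atTop 2] with n hn using hupper n hn

lemma abs_tsum_upper {n : ℕ} (hn : 2 ≤ n) {f : ℕ → ℝ} {S : ℝ} (hs : HasSum f S)
    (hb : ∀ j, |f j| ≤ 1 / (j : ℝ) ^ n) : |S| ≤ ZZ n := by
  have habs : Summable (fun j => |f j|) :=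
    Summable.of_nonneg_of_le (fun j => abs_nonneg _) hb (summableZ hn)
  rw [← hs.tsum_eq]
  calc |∑' j, f j| ≤ ∑' j, |f j| := by
        simpa using norm_tsum_le_tsum_norm (f := f) (by simpa using habs)
    _ ≤ ZZ n := Summable.tsum_le_tsum hb habs (summableZ hn)

lemma abs_tsum_lower {n : ℕ} (hn : 2 ≤ n) {f : ℕ → ℝ} {S : ℝ} (hs : HasSum f S)
    (h0 : f 0 = 0) (h1 : f 1 = 1) (hb : ∀ j, |f j| ≤ 1 / (j : ℝ) ^ n) :
    2 - ZZ n ≤ |S| := by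
  have hsum := hs.summable
  have hsum1 : Summable (fun k : ℕ => f (k + 1)) :=
    hsum.comp_injective (add_left_injective 1)
  have hsum2 : Summable (fun k : ℕ => f (k + 1 + 1)) :=
    hsum1.comp_injective (add_left_injective 1)
  have hb2 : ∀ k : ℕ, |f (k + 1 + 1)| ≤ 1 / ((k : ℝ) + 2) ^ n := by
    intro k
    refine (hb _).trans (le_of_eq ?_)
    push_cast; ring_nf
  have habs : Summable (fun k : ℕ => |f (k + 1 + 1)|) :=
    Summable.of_nonneg_of_le (fun j => abs_nonneg _) hb2 (summableT hn)
  have hT : |∑' k : ℕ, f (k + 1 + 1)| ≤ ZZ n - 1 := by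
    have h1' : |∑' k : ℕ, f (k + 1 + 1)| ≤ ∑' k : ℕ, |f (k + 1 + 1)| := by
      simpa using norm_tsum_le_tsum_norm (f := fun k : ℕ => f (k+1+1)) (by simpa using habs)
    have h2' : ∑' k : ℕ, |f (k + 1 + 1)| ≤ ∑' k : ℕ, 1 / ((k : ℝ) + 2) ^ n :=
      Summable.tsum_le_tsum hb2 habs (summableT hn)
    have := Z_eq hn
    linarith
  have hS : S = 1 + ∑' k : ℕ, f (k + 1 + 1) := by
    rw [← hs.tsum_eq, Summable.tsum_eq_zero_add hsum, h0, zero_add, Summable.tsum_eq_zero_add hsum1, h1]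
  rw [abs_le] at hT
  have h3 : 2 - ZZ n ≤ S := by rw [hS]; linarith [hT.1]
  exact h3.trans (le_abs_self _)

lemma bernPoly_eq_eval (n : ℕ) (x : ℝ) :
    bernPoly n x = Polynomial.eval x (Polynomial.map (algebraMap ℚ ℝ) (Polynomial.bernoulli n)) := by
  rw [bernPoly, Polynomial.aeval_def, Polynomial.eval_map]

lemma key {n : ℕ} (hn : 2 ≤ n) : ∃ s : ℝ,
    |s| = (2*π)^n / 2 / (n.factorial : ℝ) ∧
    (∀ x ∈ Set.Icc (0:ℝ) 1, ∃ f : ℕ → ℝ, HasSum f (s * bernPoly n x) ∧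
      ∀ j, |f j| ≤ 1 / (j : ℝ) ^ n) ∧
    (∃ x ∈ Set.Icc (0:ℝ) 1, ∃ f : ℕ → ℝ, HasSum f (s * bernPoly n x) ∧
      f 0 = 0 ∧ f 1 = 1 ∧ ∀ j, |f j| ≤ 1 / (j : ℝ) ^ n) := by
  have hπ : (0:ℝ) < π := pi_pos
  have hcabs : ∀ k : ℕ, |((-1:ℝ)) ^ (k+1) * (2*π)^n / 2 / (n.factorial : ℝ)|
      = (2*π)^n / 2 / (n.factorial : ℝ) := by
    intro k
    rw [abs_div, abs_div, abs_mul, abs_pow, abs_neg, abs_one, one_pow, one_mul]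
    rw [abs_of_nonneg (by positivity : (0:ℝ) ≤ (2*π)^n), abs_of_nonneg (by norm_num : (0:ℝ) ≤ 2),
      abs_of_nonneg (by positivity : (0:ℝ) ≤ (n.factorial : ℝ))]
  have hbound : ∀ (j : ℕ) (t : ℝ), |t| ≤ 1 → |1 / (j:ℝ)^n * t| ≤ 1 / (j:ℝ)^n := by
    intro j t ht
    rw [abs_mul, abs_of_nonneg (by positivity : (0:ℝ) ≤ 1/(j:ℝ)^n)]
    exact mul_le_of_le_one_right (by positivity) ht
  rcases Nat.even_or_odd n with ⟨k, hk⟩ | ⟨k, hk⟩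
  · have hk0 : k ≠ 0 := by omega
    have hkn : n = 2 * k := by omega
    subst hkn
    refine ⟨(-1:ℝ) ^ (k+1) * (2*π)^(2*k) / 2 / ((2*k).factorial : ℝ), hcabs k, ?_, ?_⟩
    · intro x hx
      refine ⟨fun j : ℕ => 1 / (j : ℝ) ^ (2*k) * Real.cos (2 * π * j * x), ?_, fun j =>
        hbound j _ (abs_cos_le_one _)⟩
      rw [bernPoly_eq_eval]
      have := hasSum_one_div_nat_pow_mul_cos hk0 hx
      convert this using 2
    · refine ⟨0, by norm_num, fun j : ℕ => 1 / (j : ℝ) ^ (2*k) * Real.cos (2 * π * j * 0), ?_,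
        ?_, ?_, fun j => hbound j _ (abs_cos_le_one _)⟩
      · rw [bernPoly_eq_eval]
        have := hasSum_one_div_nat_pow_mul_cos hk0 (by norm_num : (0:ℝ) ∈ Set.Icc (0:ℝ) 1)
        convert this using 2
      · simp [zero_pow (by omega : 2*k ≠ 0)]
      · norm_num
  · have hk0 : k ≠ 0 := by omega
    have hkn : n = 2 * k + 1 := by omega
    subst hkn
    refine ⟨(-1:ℝ) ^ (k+1) * (2*π)^(2*k+1) / 2 / ((2*k+1).factorial : ℝ), hcabs k, ?_, ?_⟩
    · intro x hx
      refine ⟨fun j : ℕ => 1 / (j : ℝ) ^ (2*k+1) * Real.sin (2 * π * j * x), ?_, fun j =>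
        hbound j _ (abs_sin_le_one _)⟩
      rw [bernPoly_eq_eval]
      have := hasSum_one_div_nat_pow_mul_sin hk0 hx
      convert this using 2
    · refine ⟨1/4, by norm_num, fun j : ℕ => 1 / (j : ℝ) ^ (2*k+1) * Real.sin (2 * π * j * (1/4)),
        ?_, ?_, ?_, fun j => hbound j _ (abs_sin_le_one _)⟩
      · rw [bernPoly_eq_eval]
        have := hasSum_one_div_nat_pow_mul_sin hk0
          (by norm_num : (1/4 : ℝ) ∈ Set.Icc (0:ℝ) 1)
        convert this using 2
      · simp [zero_pow (by omega : 2*k+1 ≠ 0)]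
      · show 1 / ((1:ℕ):ℝ) ^ (2*k+1) * Real.sin (2 * π * ((1:ℕ):ℝ) * (1/4)) = 1
        have h14 : 2 * π * ((1:ℕ):ℝ) * (1/4 : ℝ) = π / 2 := by push_cast; ring
        rw [h14, Real.sin_pi_div_two]
        norm_num

lemma main_bounds {n : ℕ} (hn : 2 ≤ n) :
    2 - ZZ n ≤ ((2*π)^n / 2 / (n.factorial : ℝ)) * normInf (fun x => bernPoly n x) ∧
    ((2*π)^n / 2 / (n.factorial : ℝ)) * normInf (fun x => bernPoly n x) ≤ ZZ n := by
  obtain ⟨s, hs_abs, hub, x₀, hx₀, f₀, hf₀, h00, h01, h0b⟩ := key hn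
  set c : ℝ := (2*π)^n / 2 / (n.factorial : ℝ) with hc
  have hπ := pi_pos
  have hcpos : 0 < c := by rw [hc]; positivity
  have hptwise : ∀ x ∈ Set.Icc (0:ℝ) 1, |bernPoly n x| ≤ ZZ n / c := by
    intro x hx
    obtain ⟨f, hf, hb⟩ := hub x hx
    have h1 : |s * bernPoly n x| ≤ ZZ n := abs_tsum_upper hn hf hb
    rw [abs_mul, hs_abs] at h1
    rw [le_div_iff₀ hcpos]
    linarith [h1]
  have hbdd : BddAbove ((fun x => |bernPoly n x|) '' Set.Icc (0:ℝ) 1) := ⟨ZZ n / c, by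
    rintro y ⟨x, hx, rfl⟩
    exact hptwise x hx⟩
  have hNeq : normInf (fun x => bernPoly n x) = sSup ((fun x => |bernPoly n x|) '' Set.Icc (0:ℝ) 1) := rfl
  constructor
  · have h1 : 2 - ZZ n ≤ |s * bernPoly n x₀| := abs_tsum_lower hn hf₀ h00 h01 h0b
    rw [abs_mul, hs_abs] at h1
    have h2 : |bernPoly n x₀| ≤ normInf (fun x => bernPoly n x) := by
      rw [hNeq]
      exact le_csSup hbdd ⟨x₀, hx₀, rfl⟩
    nlinarith
  · have hne : ((fun x => |bernPoly n x|) '' Set.Icc (0:ℝ) 1).Nonempty :=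
      ⟨_, ⟨0, by norm_num, rfl⟩⟩
    have h2 : normInf (fun x => bernPoly n x) ≤ ZZ n / c := by
      rw [hNeq]
      exact csSup_le hne (by rintro y ⟨x, hx, rfl⟩; exact hptwise x hx)
    calc c * normInf (fun x => bernPoly n x) ≤ c * (ZZ n / c) := by nlinarith
      _ = ZZ n := by field_simp

/-- `‖p_n‖_∞ ∼ 2/(2π)^n` as `n → ∞`; that is,
`lim_{n→∞} (2π)^n · max_{x∈[0,1]} |B_n(x)| / n! = 2`. -/
theorem sup_norm_pB_asymptotics :
    Tendsto
      (fun n : ℕ =>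
        (2 * π) ^ n * normInf (fun x => bernPoly n x) / (n.factorial : ℝ))
      atTop (nhds 2) := by
  have hev : ∀ n : ℕ, (2 * π) ^ n * normInf (fun x => bernPoly n x) / (n.factorial : ℝ)
      = 2 * (((2*π)^n / 2 / (n.factorial : ℝ)) * normInf (fun x => bernPoly n x)) := by
    intro n
    have hfac : (n.factorial : ℝ) ≠ 0 := Nat.cast_ne_zero.mpr n.factorial_ne_zero
    field_simp
  refine tendsto_of_tendsto_of_tendsto_of_le_of_le' (g := fun n => 2 * (2 - ZZ n))
    (h := fun n => 2 * ZZ n) ?_ ?_ ?_ ?_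
  · have h := ((tendsto_const_nhds (x := (2:ℝ))).sub Z_tendsto).const_mul 2
    norm_num at h
    exact h
  · have h := Z_tendsto.const_mul 2
    norm_num at h
    exact h
  · filter_upwards [eventually_ge_atTop 2] with n hn
    rw [hev n]
    linarith [(main_bounds hn).1]
  · filter_upwards [eventually_ge_atTop 2] with n hn
    rw [hev n]
    linarith [(main_bounds hn).2]
end

section
/- As n → ∞, ‖q_{2n}‖_∞ ∼ 4/(2π)^{2n}; that is, lim_{n→∞} (2π)^{2n} · max_{x∈[0,1]} |B_{2n}(x) − B_{2n}| / (2n)! = 4. -/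
open Filter Real

/-- The `n`-th Bernoulli number `B_n = B_n(0)`, as a real number. -/
noncomputable def bernNum (n : ℕ) : ℝ := (bernoulli n : ℝ)

lemma bernPoly_eq (n : ℕ) (x : ℝ) :
    bernPoly n x = (Polynomial.map (algebraMap ℚ ℝ) (Polynomial.bernoulli n)).eval x := by
  simp [bernPoly, Polynomial.aeval_def, Polynomial.eval_map]

lemma bernPoly_zero (n : ℕ) : bernPoly n 0 = bernNum n := by
  rw [bernPoly_eq, Polynomial.eval_zero_map, Polynomial.bernoulli_eval_zero, eq_ratCast, bernNum]

lemma hD (n : ℕ) (hn : n ≠ 0) {x : ℝ} (hx : x ∈ Set.Icc (0:ℝ) 1) :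
    HasSum (fun k : ℕ => 1 / (k:ℝ) ^ (2*n) * (Real.cos (2*π*k*x) - 1))
      ((-1:ℝ)^(n+1) * (2*π)^(2*n) / 2 / ((2*n).factorial : ℝ) *
        (bernPoly (2*n) x - bernNum (2*n))) := by
  have h1 := hasSum_one_div_nat_pow_mul_cos hn hx
  have h0 := hasSum_one_div_nat_pow_mul_cos hn (Set.left_mem_Icc.mpr zero_le_one)
  rw [← bernPoly_eq] at h1 h0
  simp only [mul_zero, Real.cos_zero, mul_one, bernPoly_zero] at h0
  have h := h1.sub h0
  have e : (fun k : ℕ => 1 / (k:ℝ) ^ (2*n) * (Real.cos (2*π*k*x) - 1)) =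
      fun b : ℕ => 1 / (b:ℝ) ^ (2*n) * Real.cos (2*π*b*x) - 1 / (b:ℝ) ^ (2*n) := by
    funext k; ring
  rw [e, mul_sub]; exact h

noncomputable def Zs (n : ℕ) : ℝ := ∑' k : ℕ, 1 / (k:ℝ) ^ (2*n)

lemma Zs_summable {n : ℕ} (hn : n ≠ 0) : Summable (fun k : ℕ => 1 / (k:ℝ) ^ (2*n)) :=
  Real.summable_one_div_nat_pow.mpr (by omega)

lemma Zs_ge_one {n : ℕ} (hn : n ≠ 0) : 1 ≤ Zs n := by
  have h := Summable.le_tsum (Zs_summable hn) 1 (fun j _ => by positivity)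
  rw [Zs]
  refine le_trans (le_of_eq ?_) h
  norm_num

noncomputable def Kc : ℝ := ∑' k : ℕ, 1 / ((k:ℝ) + 2) ^ 2

lemma Kc_summable : Summable (fun k : ℕ => 1 / ((k:ℝ) + 2) ^ 2) := by
  have h : Summable (fun k : ℕ => 1 / (k:ℝ) ^ 2) :=
    Real.summable_one_div_nat_pow.mpr one_lt_two
  have h2 := (summable_nat_add_iff 2).mpr h
  exact h2.congr (fun k => by push_cast; ring)

lemma Zs_le {n : ℕ} (hn : 1 ≤ n) : Zs n ≤ 1 + (1/2:ℝ) ^ (2*n-2) * Kc := by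
  have hn0 : n ≠ 0 := by omega
  have hs := Zs_summable hn0
  have hs1 : Summable (fun k : ℕ => 1 / ((k+1:ℕ):ℝ) ^ (2*n)) :=
    (summable_nat_add_iff (f := fun k : ℕ => 1 / (k:ℝ) ^ (2*n)) 1).mpr hs
  have hs2 : Summable (fun k : ℕ => 1 / ((k+1+1:ℕ):ℝ) ^ (2*n)) := by
    have h2 := (summable_nat_add_iff (f := fun k : ℕ => 1 / (k:ℝ) ^ (2*n)) 2).mpr hs
    exact h2.congr (fun k => by push_cast; ring_nf)
  have htail : (∑' k : ℕ, 1 / ((k+1+1:ℕ):ℝ) ^ (2*n)) ≤ (1/2:ℝ) ^ (2*n-2) * Kc := by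
    rw [Kc, ← tsum_mul_left]
    refine Summable.tsum_le_tsum (fun k => ?_) hs2 (Kc_summable.mul_left _)
    have ha : (2:ℝ) ≤ ((k:ℝ) + 2) := by linarith [(Nat.cast_nonneg k : (0:ℝ) ≤ (k:ℝ))]
    have ha0 : (0:ℝ) < (k:ℝ) + 2 := by positivity
    have hcast : (((k+1+1:ℕ)):ℝ) = (k:ℝ) + 2 := by push_cast; ring
    rw [hcast]
    have hsplit : (2*n) = (2*n-2) + 2 := by omega
    calc 1 / ((k:ℝ) + 2) ^ (2*n) = (1 / ((k:ℝ)+2)) ^ (2*n-2) * (1 / ((k:ℝ)+2)) ^ 2 := by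
          rw [← pow_add, ← hsplit, one_div_pow]
      _ ≤ (1/2:ℝ) ^ (2*n-2) * (1 / ((k:ℝ)+2)) ^ 2 := by
          apply mul_le_mul_of_nonneg_right _ (by positivity)
          exact pow_le_pow_left₀ (by positivity) (by rw [div_le_div_iff₀ ha0 two_pos]; linarith) _
      _ = (1/2:ℝ) ^ (2*n-2) * (1 / ((k:ℝ)+2) ^ 2) := by
          simp [div_pow]
  calc Zs n = 0 + (1 + ∑' k : ℕ, 1 / ((k+1+1:ℕ):ℝ) ^ (2*n)) := by
        have h00 : (1:ℝ) / ((0:ℕ):ℝ) ^ (2*n) = 0 := by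
          rw [Nat.cast_zero, zero_pow (by omega : 2*n ≠ 0), div_zero]
        rw [Zs, Summable.tsum_eq_zero_add hs, Summable.tsum_eq_zero_add hs1, h00]
        norm_num
    _ ≤ 0 + (1 + (1/2:ℝ) ^ (2*n-2) * Kc) := by linarith
    _ = 1 + (1/2:ℝ) ^ (2*n-2) * Kc := by ring

lemma Zs_tendsto : Tendsto Zs atTop (nhds 1) := by
  have hexp : Tendsto (fun n : ℕ => 2*n - 2) atTop atTop := by
    apply tendsto_atTop_atTop.mpr
    intro b; exact ⟨b + 1, fun a ha => by omega⟩
  have h0 : Tendsto (fun n : ℕ => (1:ℝ) + (1/2:ℝ) ^ (2*n-2) * Kc) atTop (nhds 1) := by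
    have h1 := (tendsto_pow_atTop_nhds_zero_of_lt_one (by norm_num : (0:ℝ) ≤ 1/2)
      (by norm_num : (1/2:ℝ) < 1)).comp hexp
    have h2 := (h1.mul_const Kc).const_add (1:ℝ)
    simpa using h2
  refine tendsto_of_tendsto_of_tendsto_of_le_of_le' tendsto_const_nhds h0 ?_ ?_
  · filter_upwards [eventually_ge_atTop 1] with n hn
    exact Zs_ge_one (by omega)
  · filter_upwards [eventually_ge_atTop 1] with n hn
    exact Zs_le hn

lemma key_bounds {n : ℕ} (hn : n ≠ 0) :
    4 ≤ (2 * π) ^ (2 * n) * normInf (fun x => bernPoly (2 * n) x - bernNum (2 * n)) /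
          (((2 * n).factorial : ℝ)) ∧
    (2 * π) ^ (2 * n) * normInf (fun x => bernPoly (2 * n) x - bernNum (2 * n)) /
          (((2 * n).factorial : ℝ)) ≤ 4 * Zs n := by
  set F : ℝ := (((2 * n).factorial : ℕ) : ℝ) with hFdef
  set A : ℝ := (2 * π) ^ (2 * n) with hAdef
  have hFpos : 0 < F := by
    rw [hFdef]; exact_mod_cast Nat.factorial_pos _
  have hApos : 0 < A := by rw [hAdef]; positivity
  have hcpos : 0 < A / 2 / F := by positivity
  have hcabs : |((-1:ℝ) ^ (n+1) * (2 * π) ^ (2 * n) / 2 / F)| = A / 2 / F := by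
    rw [abs_div, abs_div, abs_mul, abs_pow, abs_neg, abs_one, one_pow, one_mul,
      abs_of_pos (by positivity : (0:ℝ) < (2 * π) ^ (2 * n)), abs_two, abs_of_pos hFpos]
  have hZ0 : (0:ℝ) ≤ Zs n := le_trans zero_le_one (Zs_ge_one hn)
  have hs := Zs_summable hn
  -- pointwise upper bound
  have hub : ∀ x ∈ Set.Icc (0:ℝ) 1,
      (A / 2 / F) * |bernPoly (2 * n) x - bernNum (2 * n)| ≤ 2 * Zs n := by
    intro x hx
    have h := hD n hn hx
    have hbd : ∀ k : ℕ, |1 / (k:ℝ) ^ (2*n) * (Real.cos (2*π*k*x) - 1)| ≤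
        2 * (1 / (k:ℝ) ^ (2*n)) := by
      intro k
      rw [abs_mul, abs_of_nonneg (by positivity : (0:ℝ) ≤ 1 / (k:ℝ) ^ (2*n))]
      have hc1 : |Real.cos (2*π*k*x) - 1| ≤ 2 := by
        have := Real.neg_one_le_cos (2*π*k*x)
        have := Real.cos_le_one (2*π*k*x)
        rw [abs_le]; constructor <;> linarith
      calc 1 / (k:ℝ) ^ (2*n) * |Real.cos (2*π*k*x) - 1|
          ≤ 1 / (k:ℝ) ^ (2*n) * 2 := by
            apply mul_le_mul_of_nonneg_left hc1 (by positivity)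
        _ = 2 * (1 / (k:ℝ) ^ (2*n)) := by ring
    have hsum_abs : Summable (fun k : ℕ => |1 / (k:ℝ) ^ (2*n) * (Real.cos (2*π*k*x) - 1)|) :=
      Summable.of_nonneg_of_le (fun k => abs_nonneg _) hbd (hs.mul_left 2)
    have heq : (A / 2 / F) * |bernPoly (2 * n) x - bernNum (2 * n)| =
        |(-1:ℝ) ^ (n+1) * (2 * π) ^ (2 * n) / 2 / F * (bernPoly (2 * n) x - bernNum (2 * n))| := by
      rw [abs_mul, hcabs]
    rw [heq, ← h.tsum_eq]
    calc |∑' k : ℕ, 1 / (k:ℝ) ^ (2*n) * (Real.cos (2*π*k*x) - 1)|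
        ≤ ∑' k : ℕ, |1 / (k:ℝ) ^ (2*n) * (Real.cos (2*π*k*x) - 1)| := by
          have hna : Summable (fun k : ℕ => ‖1 / (k:ℝ) ^ (2*n) * (Real.cos (2*π*k*x) - 1)‖) := by
            simpa only [Real.norm_eq_abs] using hsum_abs
          simpa only [Real.norm_eq_abs] using
            norm_tsum_le_tsum_norm (f := fun k : ℕ => 1 / (k:ℝ) ^ (2*n) * (Real.cos (2*π*k*x) - 1)) hna
      _ ≤ ∑' k : ℕ, 2 * (1 / (k:ℝ) ^ (2*n)) := Summable.tsum_le_tsum hbd hsum_abs (hs.mul_left 2)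
      _ = 2 * Zs n := by rw [tsum_mul_left, Zs]
  -- sup bound
  have himb : ∀ y ∈ (fun x => |bernPoly (2*n) x - bernNum (2*n)|) '' Set.Icc (0:ℝ) 1,
      y ≤ 2 * Zs n / (A / 2 / F) := by
    rintro y ⟨x, hx, rfl⟩
    rw [le_div_iff₀ hcpos, mul_comm]
    exact hub x hx
  have hsup_le : normInf (fun x => bernPoly (2*n) x - bernNum (2*n)) ≤
      2 * Zs n / (A / 2 / F) := by
    apply Real.sSup_le himb
    positivity
  have hbdd : BddAbove ((fun x => |bernPoly (2*n) x - bernNum (2*n)|) '' Set.Icc (0:ℝ) 1) :=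
    ⟨2 * Zs n / (A / 2 / F), fun y hy => himb y hy⟩
  -- lower bound via x = 1/2
  have hhalf : (1/2:ℝ) ∈ Set.Icc (0:ℝ) 1 := by norm_num
  have hneg := (hD n hn hhalf).neg
  have hterm : -(1 / ((1:ℕ):ℝ) ^ (2*n) * (Real.cos (2*π*((1:ℕ):ℝ)*(1/2)) - 1)) = 2 := by
    have harg : 2*π*((1:ℕ):ℝ)*(1/2:ℝ) = π := by push_cast; ring
    rw [harg, Real.cos_pi]; norm_num
  have h2 : (2:ℝ) ≤ -((-1:ℝ) ^ (n+1) * (2 * π) ^ (2 * n) / 2 / F *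
      (bernPoly (2*n) (1/2) - bernNum (2*n))) := by
    have h2' := le_hasSum hneg 1 (fun j _ => by
      have hc := Real.cos_le_one (2*π*(j:ℝ)*(1/2))
      have hp : (0:ℝ) ≤ 1 / (j:ℝ) ^ (2*n) := by positivity
      nlinarith [mul_nonneg hp (sub_nonneg.mpr hc)])
    rw [hterm] at h2'
    exact h2'
  have h3 : (2:ℝ) ≤ (A / 2 / F) * |bernPoly (2*n) (1/2) - bernNum (2*n)| := by
    have h4 := neg_le_abs ((-1:ℝ) ^ (n+1) * (2 * π) ^ (2 * n) / 2 / F *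
      (bernPoly (2*n) (1/2) - bernNum (2*n)))
    rw [abs_mul, hcabs] at h4
    linarith
  have hmem : |bernPoly (2*n) (1/2) - bernNum (2*n)| ∈
      (fun x => |bernPoly (2*n) x - bernNum (2*n)|) '' Set.Icc (0:ℝ) 1 := ⟨1/2, hhalf, rfl⟩
  have h5 := le_csSup hbdd hmem
  have h6 : (2:ℝ) ≤ (A / 2 / F) * normInf (fun x => bernPoly (2*n) x - bernNum (2*n)) :=
    le_trans h3 (mul_le_mul_of_nonneg_left h5 hcpos.le)
  have h7 : (A / 2 / F) * normInf (fun x => bernPoly (2*n) x - bernNum (2*n)) ≤ 2 * Zs n := by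
    have := (le_div_iff₀ hcpos).mp hsup_le
    linarith [mul_comm (normInf (fun x => bernPoly (2*n) x - bernNum (2*n))) (A / 2 / F)]
  have hT : A * normInf (fun x => bernPoly (2*n) x - bernNum (2*n)) / F =
      2 * ((A / 2 / F) * normInf (fun x => bernPoly (2*n) x - bernNum (2*n))) := by
    field_simp
  constructor
  · rw [hT]; linarith
  · rw [hT]; linarith


/-- `‖q_{2n}‖_∞ ∼ 4/(2π)^{2n}` as `n → ∞`; that is,
`lim_{n→∞} (2π)^{2n} · max_{x∈[0,1]} |B_{2n}(x) − B_{2n}| / (2n)! = 4`. -/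
theorem sup_norm_qB_asymptotics :
    Tendsto
      (fun n : ℕ =>
        (2 * π) ^ (2 * n) * normInf (fun x => bernPoly (2 * n) x - bernNum (2 * n)) /
          (((2 * n).factorial : ℝ)))
      atTop (nhds 4) := by
  have hZ4 : Tendsto (fun n : ℕ => 4 * Zs n) atTop (nhds 4) := by
    simpa using Zs_tendsto.const_mul (4:ℝ)
  refine tendsto_of_tendsto_of_tendsto_of_le_of_le' tendsto_const_nhds hZ4 ?_ ?_
  · filter_upwards [eventually_ge_atTop 1] with n hn
    exact (key_bounds (by omega)).1
  · filter_upwards [eventually_ge_atTop 1] with n hn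
    exact (key_bounds (by omega)).2
end

section
/- As n → ∞, ‖q_{2n}‖_1 ∼ 2/(2π)^{2n}; that is, lim_{n→∞} (2π)^{2n} · (∫_0^1 |B_{2n}(x) − B_{2n}| dx) / (2n)! = 2. -/
open Filter Real MeasureTheory intervalIntegral

lemma bernPoly_eq_s18 (n : ℕ) (x : ℝ) : bernPoly n x = bernoulliFun n x := by
  rw [bernPoly, bernoulliFun, Polynomial.eval_map, Polynomial.aeval_def]

lemma bernNum_eq (n : ℕ) : bernNum n = bernoulliFun n 0 := by
  rw [bernNum, bernoulliFun_eval_zero]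

/-- Sign of `B_{2k}(x) - B_{2k}` on `[0,1]`. -/
lemma sign_lemma {k : ℕ} (hk : k ≠ 0) {x : ℝ} (hx : x ∈ Set.Icc (0:ℝ) 1) :
    (-1 : ℝ) ^ (k + 1) * (bernoulliFun (2 * k) x - bernoulliFun (2 * k) 0) ≤ 0 := by
  have h1 := hasSum_one_div_nat_pow_mul_cos hk hx
  have h0 := hasSum_one_div_nat_pow_mul_cos hk (Set.left_mem_Icc.mpr zero_le_one)
  have hs := h1.sub h0
  have hle : (-1 : ℝ) ^ (k + 1) * (2 * π) ^ (2 * k) / 2 / ((2 * k).factorial : ℝ) *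
      (Polynomial.map (algebraMap ℚ ℝ) (Polynomial.bernoulli (2 * k))).eval x -
      (-1 : ℝ) ^ (k + 1) * (2 * π) ^ (2 * k) / 2 / ((2 * k).factorial : ℝ) *
      (Polynomial.map (algebraMap ℚ ℝ) (Polynomial.bernoulli (2 * k))).eval 0 ≤ 0 := by
    refine hasSum_le (f := fun n : ℕ =>
        1 / (n : ℝ) ^ (2 * k) * Real.cos (2 * π * n * x) -
        1 / (n : ℝ) ^ (2 * k) * Real.cos (2 * π * n * 0)) ?_ hs hasSum_zero
    intro n
    have h1 : Real.cos (2 * π * n * x) ≤ 1 := Real.cos_le_one _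
    have h2 : Real.cos (2 * π * n * 0) = 1 := by rw [mul_zero, Real.cos_zero]
    have hnn : (0:ℝ) ≤ 1 / (n : ℝ) ^ (2 * k) := by positivity
    simp only [mul_zero, Real.cos_zero]
    nlinarith [mul_le_mul_of_nonneg_left h1 hnn]
  have hD : (0:ℝ) < (2 * π) ^ (2 * k) / 2 / ((2 * k).factorial : ℝ) := by positivity
  have key : (-1 : ℝ) ^ (k + 1) * ((2 * π) ^ (2 * k) / 2 / ((2 * k).factorial : ℝ)) *
      (bernoulliFun (2 * k) x - bernoulliFun (2 * k) 0) ≤ 0 := by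
    have : (-1 : ℝ) ^ (k + 1) * ((2 * π) ^ (2 * k) / 2 / ((2 * k).factorial : ℝ)) *
        (bernoulliFun (2 * k) x - bernoulliFun (2 * k) 0) =
        (-1 : ℝ) ^ (k + 1) * (2 * π) ^ (2 * k) / 2 / ((2 * k).factorial : ℝ) *
        (Polynomial.map (algebraMap ℚ ℝ) (Polynomial.bernoulli (2 * k))).eval x -
        (-1 : ℝ) ^ (k + 1) * (2 * π) ^ (2 * k) / 2 / ((2 * k).factorial : ℝ) *
        (Polynomial.map (algebraMap ℚ ℝ) (Polynomial.bernoulli (2 * k))).eval 0 := by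
      rw [bernoulliFun, bernoulliFun]; ring
    rw [this]; exact hle
  rcases Nat.even_or_odd (k + 1) with he | ho
  · rw [he.neg_one_pow] at key ⊢
    nlinarith
  · rw [ho.neg_one_pow] at key ⊢
    nlinarith

lemma my_integral_bern_zero {m : ℕ} (hm : m ≠ 0) :
    (∫ x in (0:ℝ)..1, bernoulliFun m x) = 0 := by
  have h : (∫ x in (0:ℝ)..1, bernoulliFun m x) =
      bernoulliFun (m + 1) 1 / (m + 1) - bernoulliFun (m + 1) 0 / (m + 1) := by
    refine integral_eq_sub_of_hasDerivAt (fun x _ => antideriv_bernoulliFun m x) ?_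
    exact ((continuous_bernoulliFun m).intervalIntegrable 0 1)
  rw [h, bernoulliFun_endpoints_eq_of_ne_one (by omega : m + 1 ≠ 1), sub_self]

lemma key_integral {k : ℕ} (hk : k ≠ 0) :
    (∫ x in (0:ℝ)..1, |bernPoly (2 * k) x - bernNum (2 * k)|) =
      (-1 : ℝ) ^ (k + 1) * bernNum (2 * k) := by
  have habs : ∀ x ∈ Set.uIcc (0:ℝ) 1,
      |bernPoly (2 * k) x - bernNum (2 * k)| =
      (-1 : ℝ) ^ k * (bernoulliFun (2 * k) x - bernoulliFun (2 * k) 0) := by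
    intro x hx
    rw [Set.uIcc_of_le zero_le_one] at hx
    have hs := sign_lemma hk hx
    rw [bernPoly_eq_s18, bernNum_eq]
    rcases Nat.even_or_odd k with he | ho
    · have h2 : Odd (k + 1) := Even.add_one he
      rw [h2.neg_one_pow] at hs
      rw [he.neg_one_pow, one_mul, abs_of_nonneg (by linarith)]
    · have h2 : Even (k + 1) := Odd.add_one ho
      rw [h2.neg_one_pow, one_mul] at hs
      rw [ho.neg_one_pow, neg_one_mul, abs_of_nonpos hs]
  rw [intervalIntegral.integral_congr habs]
  rw [intervalIntegral.integral_const_mul]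
  have hint : (∫ x in (0:ℝ)..1, (bernoulliFun (2 * k) x - bernoulliFun (2 * k) 0)) =
      - bernoulliFun (2 * k) 0 := by
    rw [intervalIntegral.integral_sub ((continuous_bernoulliFun _).intervalIntegrable 0 1)
      (intervalIntegrable_const), my_integral_bern_zero (by omega : 2 * k ≠ 0),
      intervalIntegral.integral_const]
    simp
  rw [hint, bernNum_eq, pow_succ]
  ring

/-- `‖q_{2n}‖_1 ∼ 2/(2π)^{2n}` as `n → ∞`; that is,
`lim_{n→∞} (2π)^{2n} · (∫_0^1 |B_{2n}(x) − B_{2n}| dx) / (2n)! = 2`. -/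
theorem L1_norm_qB_asymptotics :
    Tendsto
      (fun n : ℕ =>
        (2 * π) ^ (2 * n) * (∫ x in (0:ℝ)..1, |bernPoly (2 * n) x - bernNum (2 * n)|) /
          (((2 * n).factorial : ℝ)))
      atTop (nhds 2) := by
  -- let A k be the zeta value
  set A : ℕ → ℝ := fun k => (-1 : ℝ) ^ (k + 1) * (2 : ℝ) ^ (2 * k - 1) * π ^ (2 * k) *
      (bernoulli (2 * k) : ℝ) / ((2 * k).factorial : ℝ) with hA
  have hAsum : ∀ k : ℕ, k ≠ 0 → HasSum (fun n : ℕ => 1 / (n : ℝ) ^ (2 * k)) (A k) :=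
    fun k hk => hasSum_zeta_nat hk
  -- shifted sums
  have hshift : ∀ k : ℕ, k ≠ 0 →
      HasSum (fun n : ℕ => 1 / ((n : ℝ) + 2) ^ (2 * k)) (A k - 1) := by
    intro k hk
    have h := (hasSum_nat_add_iff' (f := fun n : ℕ => 1 / (n : ℝ) ^ (2 * k)) 2).mpr (hAsum k hk)
    have hsum2 : (∑ i ∈ Finset.range 2, 1 / (i : ℝ) ^ (2 * k)) = 1 := by
      rw [Finset.sum_range_succ, Finset.sum_range_one]
      rw [Nat.cast_zero, Nat.cast_one, zero_pow (by omega : 2 * k ≠ 0)]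
      norm_num
    rw [hsum2] at h
    have hfun : (fun n : ℕ => 1 / ((n : ℝ) + 2) ^ (2 * k)) =
        fun n : ℕ => 1 / ((((n + 2 : ℕ)) : ℝ)) ^ (2 * k) := by
      funext n; push_cast; ring
    rw [hfun]
    exact h
  -- bounds for A k
  have hlow : ∀ k : ℕ, k ≠ 0 → (1:ℝ) ≤ A k := by
    intro k hk
    have h := hshift k hk
    have : (0:ℝ) ≤ A k - 1 := by
      refine hasSum_le (f := fun _ : ℕ => (0:ℝ)) ?_ hasSum_zero h
      intro n; positivity
    linarith
  have hhigh : ∀ k : ℕ, k ≠ 0 → A k ≤ 1 + (1/4:ℝ) ^ (k - 1) * (π ^ 2 / 6 - 1) := by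
    intro k hk
    have h2 := hshift 1 one_ne_zero
    have hA1 : A 1 = π ^ 2 / 6 := by
      have := hasSum_zeta_two
      have h1 := hAsum 1 one_ne_zero
      have h1' : HasSum (fun n : ℕ => (1:ℝ) / (n : ℝ) ^ 2) (A 1) := by
        simpa using h1
      exact (h1'.unique this)
    rw [hA1] at h2
    have hptw : ∀ n : ℕ, 1 / ((n : ℝ) + 2) ^ (2 * k) ≤
        (1/4:ℝ) ^ (k - 1) * (1 / ((n : ℝ) + 2) ^ (2 * 1)) := by
      intro n
      have hn2 : (2:ℝ) ≤ (n : ℝ) + 2 := by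
        have := Nat.cast_nonneg (α := ℝ) n; linarith
      have hpos : (0:ℝ) < (n : ℝ) + 2 := by positivity
      have hkey : ((n:ℝ) + 2) ^ 2 * (4:ℝ) ^ (k - 1) ≤ ((n:ℝ) + 2) ^ (2 * k) := by
        have h1 : (4:ℝ) ^ (k - 1) = (2:ℝ) ^ (2 * k - 2) := by
          have : (4:ℝ) = (2:ℝ) ^ 2 := by norm_num
          rw [this, ← pow_mul]
          congr 1
          omega
        have h2 : (2:ℝ) ^ (2 * k - 2) ≤ ((n:ℝ) + 2) ^ (2 * k - 2) :=
          pow_le_pow_left₀ (by norm_num) hn2 _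
        calc ((n:ℝ) + 2) ^ 2 * (4:ℝ) ^ (k - 1)
            ≤ ((n:ℝ) + 2) ^ 2 * ((n:ℝ) + 2) ^ (2 * k - 2) := by
              rw [h1]; exact mul_le_mul_of_nonneg_left h2 (by positivity)
          _ = ((n:ℝ) + 2) ^ (2 * k) := by
              rw [← pow_add]; congr 1; omega
      have step : 1 / ((n : ℝ) + 2) ^ (2 * k) ≤ 1 / (((n:ℝ) + 2) ^ 2 * (4:ℝ) ^ (k - 1)) :=
        one_div_le_one_div_of_le (by positivity) hkey
      refine step.trans_eq ?_
      rw [one_div, mul_inv, div_pow, one_pow, mul_one]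
      rw [div_eq_mul_inv, one_div, one_mul]
      ring_nf
    have hcmp := hasSum_le hptw (hshift k hk) (h2.mul_left ((1/4:ℝ) ^ (k - 1)))
    linarith
  -- A tends to 1
  have hAtend : Tendsto A atTop (nhds 1) := by
    have hub : Tendsto (fun k : ℕ => 1 + (1/4:ℝ) ^ (k - 1) * (π ^ 2 / 6 - 1)) atTop (nhds 1) := by
      have h0 : Tendsto (fun k : ℕ => (1/4:ℝ) ^ (k - 1)) atTop (nhds 0) := by
        have := tendsto_pow_atTop_nhds_zero_of_lt_one (by norm_num : (0:ℝ) ≤ 1/4)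
          (by norm_num : (1/4:ℝ) < 1)
        exact this.comp (tendsto_sub_atTop_nat 1)
      have := h0.mul_const (π ^ 2 / 6 - 1)
      rw [zero_mul] at this
      simpa using (tendsto_const_nhds (x := (1:ℝ))).add this
    refine tendsto_of_tendsto_of_tendsto_of_le_of_le' tendsto_const_nhds hub ?_ ?_
    · filter_upwards [eventually_ge_atTop 1] with k hk
      exact hlow k (by omega)
    · filter_upwards [eventually_ge_atTop 1] with k hk
      exact hhigh k (by omega)
  -- now the main function equals 2 * A k eventually
  have heq : ∀ k : ℕ, k ≠ 0 →
      (2 * π) ^ (2 * k) * (∫ x in (0:ℝ)..1, |bernPoly (2 * k) x - bernNum (2 * k)|) /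
        (((2 * k).factorial : ℝ)) = 2 * A k := by
    intro k hk
    rw [key_integral hk]
    simp only [hA]
    have hpow : (2:ℝ) * (2:ℝ) ^ (2 * k - 1) = (2:ℝ) ^ (2 * k) := by
      rw [← pow_succ']
      congr 1
      omega
    rw [bernNum, mul_pow, ← hpow]
    ring
  have h2A : Tendsto (fun k => 2 * A k) atTop (nhds 2) := by
    have := hAtend.const_mul (2:ℝ)
    simpa using this
  refine h2A.congr' ?_
  filter_upwards [eventually_ge_atTop 1] with k hk
  exact (heq k (by omega)).symm
end

section
/- For every even integer r ≥ 2, as n → ∞, ‖p_n‖_r ∼ (2/(2π)^n) · ( (1·3·5···(r−1)) / (2·4·6···r) )^{1/r}; that is, lim_{n→∞} (2π)^n ‖p_n‖_r = 2 ( (r−1)!!/r!! )^{1/r}. -/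
open Filter Real MeasureTheory intervalIntegral Nat

lemma myNatOddProd (j : ℕ) : ∏ i ∈ Finset.range (j+1), (2*i+1) = (2*j+1)‼ := by
  rw [Finset.prod_range_succ', ← Nat.doubleFactorial_eq_prod_odd]
  simp

lemma myProdD (j : ℕ) :
    ∏ i ∈ Finset.range (j+1), ((2*(i:ℝ)+1)/(2*(i:ℝ)+2))
      = ((2*j+1)‼ : ℝ) / ((2*(j+1))‼ : ℝ) := by
  rw [Finset.prod_div_distrib, ← myNatOddProd j, Nat.doubleFactorial_eq_prod_even (j+1)]
  push_cast
  congr 1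
  exact Finset.prod_congr rfl (fun i _ => by ring)

lemma mySinIntEven (k : ℕ) :
    ∫ x in (0:ℝ)..1, Real.sin (2*π*x) ^ (2*k)
      = ∏ i ∈ Finset.range k, ((2*(i:ℝ)+1)/(2*(i:ℝ)+2)) := by
  have hπ : (2*π) ≠ 0 := by positivity
  have h1 := intervalIntegral.integral_comp_mul_left (a := (0:ℝ)) (b := 1)
    (fun u => Real.sin u ^ (2*k)) hπ
  have hper : Function.Periodic (fun x => Real.sin x ^ (2*k)) π := by
    intro x
    simp [Real.sin_add_pi, (even_two_mul k).neg_pow]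
  have hint : ∀ a b : ℝ, IntervalIntegrable (fun x => Real.sin x ^ (2*k)) volume a b :=
    fun a b => (Real.continuous_sin.pow _).intervalIntegrable a b
  have hsplit := intervalIntegral.integral_add_adjacent_intervals (hint 0 π) (hint π (2*π))
  have hshift : ∫ u in π..(2*π), Real.sin u ^ (2*k) = ∫ u in (0:ℝ)..π, Real.sin u ^ (2*k) := by
    have := hper.intervalIntegral_add_eq π 0
    simpa [two_mul] using this
  have h2 : ∫ u in (0:ℝ)..2*π, Real.sin u ^ (2*k) = 2 * ∫ u in (0:ℝ)..π, Real.sin u ^ (2*k) := by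
    rw [hshift] at hsplit
    linarith
  simp only [mul_zero, mul_one] at h1
  rw [h1, h2, integral_sin_pow_even, smul_eq_mul]
  field_simp

lemma mySinNormInt (j : ℕ) :
    ∫ x in (0:ℝ)..1, (2*|Real.sin (2*π*x)|) ^ (2*(j+1))
      = 2^(2*(j+1)) * (((2*j+1)‼ : ℝ) / ((2*(j+1))‼ : ℝ)) := by
  have h : ∀ x ∈ Set.uIcc (0:ℝ) 1, (2*|Real.sin (2*π*x)|)^(2*(j+1))
      = (2:ℝ)^(2*(j+1)) * Real.sin (2*π*x)^(2*(j+1)) := by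
    intro x _
    rw [mul_pow, (even_two_mul _).pow_abs]
  rw [intervalIntegral.integral_congr h, intervalIntegral.integral_const_mul,
    mySinIntEven, myProdD]

lemma myCosNormInt (j : ℕ) :
    ∫ x in (0:ℝ)..1, (2*|Real.cos (2*π*x)|) ^ (2*(j+1))
      = 2^(2*(j+1)) * (((2*j+1)‼ : ℝ) / ((2*(j+1))‼ : ℝ)) := by
  have hF : Function.Periodic (fun y : ℝ => (2*|Real.sin (2*π*y)|)^(2*(j+1))) 1 := by
    intro y
    have h : 2*π*(y+1) = 2*π*y + 2*π := by ring
    simp only [h, Real.sin_add_two_pi]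
  have h1 : ∀ x ∈ Set.uIcc (0:ℝ) 1, (2*|Real.cos (2*π*x)|)^(2*(j+1))
      = (fun y : ℝ => (2*|Real.sin (2*π*y)|)^(2*(j+1))) (x + 4⁻¹) := by
    intro x _
    have h : 2*π*(x+4⁻¹) = 2*π*x + π/2 := by ring
    simp only [h, Real.sin_add_pi_div_two]
  rw [intervalIntegral.integral_congr h1,
    intervalIntegral.integral_comp_add_right (fun y : ℝ => (2*|Real.sin (2*π*y)|)^(2*(j+1))) 4⁻¹]
  have h2 := hF.intervalIntegral_add_eq 4⁻¹ 0
  norm_num at h2 ⊢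
  rw [h2]
  have := mySinNormInt j
  norm_num at this ⊢
  convert this using 2

/-- The limiting trig profile of the normalized Bernoulli polynomial. -/
noncomputable def trigB (n : ℕ) (x : ℝ) : ℝ :=
  if Even n then 2*|Real.cos (2*π*x)| else 2*|Real.sin (2*π*x)|

lemma trigB_nonneg (n : ℕ) (x : ℝ) : 0 ≤ trigB n x := by
  unfold trigB; split_ifs <;> positivity

lemma trigB_le_two (n : ℕ) (x : ℝ) : trigB n x ≤ 2 := by
  unfold trigB
  split_ifs
  · nlinarith [Real.abs_cos_le_one (2*π*x)]
  · nlinarith [Real.abs_sin_le_one (2*π*x)]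

lemma trigB_continuous (n : ℕ) : Continuous (trigB n) := by
  unfold trigB; split_ifs <;> fun_prop

lemma myTrigInt (j n : ℕ) :
    ∫ x in (0:ℝ)..1, (trigB n x)^(2*(j+1))
      = 2^(2*(j+1)) * (((2*j+1)‼ : ℝ) / ((2*(j+1))‼ : ℝ)) := by
  unfold trigB
  split_ifs with h
  · exact myCosNormInt j
  · exact mySinNormInt j

lemma myPowLip (m : ℕ) {a b : ℝ} (ha : a ∈ Set.Icc (0:ℝ) 3) (hb : b ∈ Set.Icc (0:ℝ) 3) :
    |a ^ m - b ^ m| ≤ (m : ℝ) * 3 ^ m * |a - b| := by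
  obtain ⟨ha0, ha3⟩ := ha
  obtain ⟨hb0, hb3⟩ := hb
  induction m with
  | zero => simp
  | succ m ih =>
    have key : a^(m+1) - b^(m+1) = a*(a^m - b^m) + (a - b)*b^m := by ring
    have h1 : |a^(m+1) - b^(m+1)| ≤ |a| * |a^m - b^m| + |a - b| * |b^m| := by
      rw [key]
      exact (abs_add_le _ _).trans (by rw [abs_mul, abs_mul])
    have hbm : |b^m| ≤ 3^m := by
      rw [abs_of_nonneg (pow_nonneg hb0 m)]
      exact pow_le_pow_left₀ hb0 hb3 m
    have haa : |a| ≤ 3 := abs_le.mpr ⟨by linarith, ha3⟩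
    have h3 : (0:ℝ) ≤ |a - b| := abs_nonneg _
    have h4 : (0:ℝ) ≤ |a^m - b^m| := abs_nonneg _
    have h5 : (0:ℝ) < 3^m := by positivity
    have e1 : |a| * |a^m - b^m| ≤ 3 * ((m:ℝ) * 3^m * |a - b|) :=
      mul_le_mul haa ih h4 (by norm_num)
    have e2 : |a - b| * |b^m| ≤ |a - b| * 3^m := mul_le_mul_of_nonneg_left hbm h3
    have e3 : (0:ℝ) ≤ 3^m * |a - b| := mul_nonneg h5.le h3
    push_cast
    calc |a^(m+1) - b^(m+1)| ≤ 3 * ((m:ℝ) * 3^m * |a - b|) + |a - b| * 3^m := by linarith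
    _ ≤ ((m:ℝ)+1) * 3^(m+1) * |a - b| := by rw [pow_succ]; nlinarith

lemma mySumTail (n : ℕ) (hn : 2 ≤ n) (g : ℕ → ℝ) (hg : ∀ m, |g m| ≤ 1)
    (S : ℝ) (hS : HasSum (fun m : ℕ => 1/(m:ℝ)^n * g m) S) :
    |S - g 1| ≤ 8 * (2:ℝ)⁻¹ ^ n := by
  set f : ℕ → ℝ := fun m => 1/(m:ℝ)^n * g m with hf
  have hT : HasSum (fun m => f (m + 2)) (S - ∑ i ∈ Finset.range 2, f i) :=
    (hasSum_nat_add_iff' 2).mpr hS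
  have hsum2 : ∑ i ∈ Finset.range 2, f i = g 1 := by
    simp [Finset.sum_range_succ, hf, zero_pow (show n ≠ 0 by omega)]
  rw [hsum2] at hT
  obtain ⟨j, hj⟩ : ∃ j, n = j + 2 := ⟨n - 2, by omega⟩
  have hbound : ∀ m : ℕ, |f (m + 2)| ≤ (4 * (2:ℝ)⁻¹ ^ n) * (1/((m:ℝ)+2)^2) := by
    intro m
    have hM : (2:ℝ) ≤ (m:ℝ)+2 := by
      have : (0:ℝ) ≤ (m:ℝ) := Nat.cast_nonneg m
      linarith
    have hMpos : (0:ℝ) < (m:ℝ)+2 := by linarith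
    have h1 : |f (m+2)| ≤ 1/((m:ℝ)+2)^n := by
      have hcast : ((m+2:ℕ):ℝ) = (m:ℝ)+2 := by push_cast; ring
      have heq : |f (m+2)| = (1/((m:ℝ)+2)^n) * |g (m+2)| := by
        rw [hf]
        simp only [abs_mul, hcast]
        congr 1
        rw [abs_of_nonneg (by positivity)]
      rw [heq]
      calc (1/((m:ℝ)+2)^n) * |g (m+2)| ≤ (1/((m:ℝ)+2)^n) * 1 :=
            mul_le_mul_of_nonneg_left (hg _) (by positivity)
      _ = 1/((m:ℝ)+2)^n := mul_one _
    have h2 : 1/((m:ℝ)+2)^n ≤ 4 * (2:ℝ)⁻¹^n * (1/((m:ℝ)+2)^2) := by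
      subst hj
      have key : (1:ℝ)/((m:ℝ)+2)^j ≤ (2:ℝ)⁻¹ ^ j := by
        rw [one_div, ← inv_pow]
        exact pow_le_pow_left₀ (inv_nonneg.mpr hMpos.le) (inv_anti₀ two_pos hM) j
      calc 1/((m:ℝ)+2)^(j+2) = (1/((m:ℝ)+2)^j) * (1/((m:ℝ)+2)^2) := by
            rw [pow_add, one_div_mul_one_div]
      _ ≤ (2:ℝ)⁻¹^j * (1/((m:ℝ)+2)^2) := mul_le_mul_of_nonneg_right key (by positivity)
      _ = 4 * (2:ℝ)⁻¹^(j+2) * (1/((m:ℝ)+2)^2) := by rw [pow_add]; ring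
    exact h1.trans h2
  have hz : HasSum (fun m : ℕ => 1/((m:ℝ)+2)^2) (π^2/6 - 1) := by
    have h1 := (hasSum_nat_add_iff' (f := fun m : ℕ => 1/(m:ℝ)^2) 2).mpr hasSum_zeta_two
    have e1 : (fun m : ℕ => 1/((m:ℝ)+2)^2) = (fun n : ℕ => 1/((n+2:ℕ):ℝ)^2) := by
      funext m; push_cast; ring
    have e2 : (π^2/6 - 1) = π^2/6 - ∑ i ∈ Finset.range 2, 1/(i:ℝ)^2 := by
      norm_num [Finset.sum_range_succ]
    rw [e1, e2]; exact h1
  have hzC := hz.mul_left (4 * (2:ℝ)⁻¹ ^ n)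
  have hsummable_abs : Summable (fun m => |f (m+2)|) :=
    Summable.of_nonneg_of_le (fun m => abs_nonneg _) hbound hzC.summable
  have h3 : |S - g 1| ≤ ∑' m, |f (m+2)| := by
    rw [← hT.tsum_eq]
    simpa [Real.norm_eq_abs] using
      norm_tsum_le_tsum_norm (f := fun m => f (m+2))
        (by simpa [Real.norm_eq_abs] using hsummable_abs)
  have h4 : ∑' m, |f (m+2)| ≤ (4 * (2:ℝ)⁻¹^n) * (π^2/6 - 1) := by
    rw [← hzC.tsum_eq]
    exact Summable.tsum_le_tsum hbound hsummable_abs hzC.summable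
  have h5 : (4 * (2:ℝ)⁻¹^n) * (π^2/6 - 1) ≤ 8 * (2:ℝ)⁻¹^n := by
    have hπ4 : π ≤ 4 := Real.pi_le_four
    have hπ0 : 0 < π := Real.pi_pos
    have hq : π^2/6 - 1 ≤ 2 := by nlinarith
    calc (4 * (2:ℝ)⁻¹^n) * (π^2/6 - 1) ≤ (4 * (2:ℝ)⁻¹^n) * 2 :=
          mul_le_mul_of_nonneg_left hq (by positivity)
    _ = 8 * (2:ℝ)⁻¹^n := by ring
  linarith

lemma myTailBound (n : ℕ) (hn : 2 ≤ n) {x : ℝ} (hx : x ∈ Set.Icc (0:ℝ) 1) :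
    abs (|(2*π)^n * (bernPoly n x / (n.factorial : ℝ))| - trigB n x) ≤ 16 * (2:ℝ)⁻¹ ^ n := by
  have hbp : bernPoly n x = (Polynomial.map (algebraMap ℚ ℝ) (Polynomial.bernoulli n)).eval x := by
    rw [bernPoly, Polynomial.aeval_def, Polynomial.eval_map]
  set P : ℝ := (Polynomial.map (algebraMap ℚ ℝ) (Polynomial.bernoulli n)).eval x with hP
  have hq : |(2*π)^n * (bernPoly n x / (n.factorial : ℝ))|
      = (2*π)^n / (n.factorial : ℝ) * |P| := by
    rw [hbp, abs_mul, abs_div, abs_of_nonneg (by positivity : (0:ℝ) ≤ (2*π)^n),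
      abs_of_nonneg (by positivity : (0:ℝ) ≤ ((n.factorial : ℝ)))]
    ring
  rcases Nat.even_or_odd n with he | ho
  · obtain ⟨k, hk0⟩ := he
    have hk : n = 2*k := by omega
    have hkpos : k ≠ 0 := by omega
    subst hk
    have hS := hasSum_one_div_nat_pow_mul_cos hkpos hx
    set S : ℝ := (-1 : ℝ) ^ (k + 1) * (2 * π) ^ (2 * k) / 2 / ((2 * k)! : ℝ) * P with hSdef
    have habs : (2*π)^(2*k) / (((2*k).factorial : ℝ)) * |P| = 2 * |S| := by
      rw [hSdef, abs_mul, abs_div, abs_div, abs_mul, abs_pow, abs_pow, abs_neg, abs_one,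
        one_pow, one_mul, abs_of_nonneg (by positivity : (0:ℝ) ≤ 2*π),
        abs_of_nonneg (by positivity : (0:ℝ) ≤ (((2*k)! : ℝ))), abs_two]
      field_simp
    have htail : |S - Real.cos (2*π*(1:ℕ)*x)| ≤ 8 * (2:ℝ)⁻¹ ^ (2*k) := by
      apply mySumTail (2*k) hn (fun m => Real.cos (2*π*m*x)) (fun m => Real.abs_cos_le_one _) S
      exact hS
    have hcos1 : Real.cos (2*π*(1:ℕ)*x) = Real.cos (2*π*x) := by norm_num
    rw [hcos1] at htail
    have htrig : trigB (2*k) x = 2*|Real.cos (2*π*x)| := by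
      simp [trigB, even_two_mul k]
    rw [hq, habs, htrig]
    calc abs (2*|S| - 2*|Real.cos (2*π*x)|) = 2 * abs (|S| - |Real.cos (2*π*x)|) := by
          rw [show 2*|S| - 2*|Real.cos (2*π*x)| = 2*(|S| - |Real.cos (2*π*x)|) from by ring,
            abs_mul, abs_two]
    _ ≤ 2 * |S - Real.cos (2*π*x)| := by
          have := abs_abs_sub_abs_le_abs_sub S (Real.cos (2*π*x))
          linarith
    _ ≤ 2 * (8 * (2:ℝ)⁻¹ ^ (2*k)) := by linarith
    _ = 16 * (2:ℝ)⁻¹ ^ (2*k) := by ring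
  · obtain ⟨k, hk0⟩ := ho
    have hkpos : k ≠ 0 := by omega
    subst hk0
    have hS := hasSum_one_div_nat_pow_mul_sin hkpos hx
    set S : ℝ := (-1 : ℝ) ^ (k + 1) * (2 * π) ^ (2 * k + 1) / 2 / ((2 * k + 1)! : ℝ) * P with hSdef
    have habs : (2*π)^(2*k+1) / ((((2*k+1)).factorial : ℝ)) * |P| = 2 * |S| := by
      rw [hSdef, abs_mul, abs_div, abs_div, abs_mul, abs_pow, abs_pow, abs_neg, abs_one,
        one_pow, one_mul, abs_of_nonneg (by positivity : (0:ℝ) ≤ 2*π),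
        abs_of_nonneg (by positivity : (0:ℝ) ≤ (((2*k+1)! : ℝ))), abs_two]
      field_simp
    have htail : |S - Real.sin (2*π*(1:ℕ)*x)| ≤ 8 * (2:ℝ)⁻¹ ^ (2*k+1) := by
      apply mySumTail (2*k+1) hn (fun m => Real.sin (2*π*m*x))
        (fun m => Real.abs_sin_le_one _) S
      exact hS
    have hsin1 : Real.sin (2*π*(1:ℕ)*x) = Real.sin (2*π*x) := by norm_num
    rw [hsin1] at htail
    have htrig : trigB (2*k+1) x = 2*|Real.sin (2*π*x)| := by
      simp [trigB, Nat.even_add_one, Nat.not_even_iff_odd, (even_two_mul k)]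
    rw [hq, habs, htrig]
    calc abs (2*|S| - 2*|Real.sin (2*π*x)|) = 2 * abs (|S| - |Real.sin (2*π*x)|) := by
          rw [show 2*|S| - 2*|Real.sin (2*π*x)| = 2*(|S| - |Real.sin (2*π*x)|) from by ring,
            abs_mul, abs_two]
    _ ≤ 2 * |S - Real.sin (2*π*x)| := by
          have := abs_abs_sub_abs_le_abs_sub S (Real.sin (2*π*x))
          linarith
    _ ≤ 2 * (8 * (2:ℝ)⁻¹ ^ (2*k+1)) := by linarith
    _ = 16 * (2:ℝ)⁻¹ ^ (2*k+1) := by ring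

/-- For every even integer `r ≥ 2`,
`‖p_n‖_r ∼ (2/(2π)^n) · ((1·3·5···(r−1)) / (2·4·6···r))^{1/r}` as `n → ∞`, where
`p_n(x) = B_n(x)/n!`; that is, `lim_{n→∞} (2π)^n ‖p_n‖_r = 2 ((r−1)!!/r!!)^{1/r}`. -/
theorem Lr_norm_pB_asymptotics_even (r : ℕ) (hr : 2 ≤ r) (hreven : Even r) :
    Tendsto
      (fun n : ℕ =>
        (2 * π) ^ n *
          (∫ x in (0:ℝ)..1, |bernPoly n x / (n.factorial : ℝ)| ^ (r : ℝ)) ^ (1 / (r : ℝ)))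
      atTop
      (nhds (2 * ((((r - 1).doubleFactorial : ℝ)) / ((r.doubleFactorial : ℝ))) ^ (1 / (r : ℝ)))) := by
  have hr0 : (r:ℝ) ≠ 0 := Nat.cast_ne_zero.mpr (by omega)
  obtain ⟨j, hj⟩ : ∃ j, r = 2*(j+1) := by
    obtain ⟨k, hk⟩ := hreven
    exact ⟨k - 1, by omega⟩
  have hD0 : (0:ℝ) < ((2*j+1)‼ : ℝ) / ((2*(j+1))‼ : ℝ) :=
    div_pos (Nat.cast_pos.mpr (Nat.doubleFactorial_pos _))
      (Nat.cast_pos.mpr (Nat.doubleFactorial_pos _))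
  set L : ℝ := 2^r * (((2*j+1)‼ : ℝ) / ((2*(j+1))‼ : ℝ)) with hLdef
  have hL0 : 0 < L := by positivity
  have hbc : ∀ n : ℕ, Continuous (fun x => bernPoly n x) := by
    intro n
    unfold bernPoly
    exact Polynomial.continuous_aeval _
  have hcont : ∀ n : ℕ,
      Continuous (fun x => |(2*π)^n * (bernPoly n x / (n.factorial:ℝ))|^r) := by
    intro n
    exact ((continuous_const.mul ((hbc n).div_const _)).abs).pow r
  have htcont : ∀ n : ℕ, Continuous (fun x => trigB n x ^ r) :=
    fun n => (trigB_continuous n).pow r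
  have hLint : ∀ n : ℕ, L = ∫ x in (0:ℝ)..1, trigB n x ^ r := by
    intro n
    rw [hLdef, hj]
    exact (myTrigInt j n).symm
  -- convergence of the r-th power integrals
  have hIL : ∀ᶠ n in atTop,
      ‖(∫ x in (0:ℝ)..1, |(2*π)^n * (bernPoly n x / (n.factorial:ℝ))|^r) - L‖
        ≤ ((r:ℝ) * 3^r * 16) * (2:ℝ)⁻¹^n := by
    filter_upwards [eventually_ge_atTop 4] with n hn4
    have hn2 : 2 ≤ n := by omega
    have hsub : (∫ x in (0:ℝ)..1, |(2*π)^n * (bernPoly n x / (n.factorial:ℝ))|^r) - L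
        = ∫ x in (0:ℝ)..1,
            (|(2*π)^n * (bernPoly n x / (n.factorial:ℝ))|^r - trigB n x ^ r) := by
      rw [hLint n, ← intervalIntegral.integral_sub ((hcont n).intervalIntegrable 0 1)
        ((htcont n).intervalIntegrable 0 1)]
    have heps : 16 * (2:ℝ)⁻¹^n ≤ 1 := by
      have h1 : (2:ℝ)⁻¹^n ≤ (2:ℝ)⁻¹^4 :=
        pow_le_pow_of_le_one (by norm_num) (by norm_num) hn4
      norm_num at h1
      linarith
    have hptwise : ∀ x ∈ Set.uIoc (0:ℝ) 1,
        ‖|(2*π)^n * (bernPoly n x / (n.factorial:ℝ))|^r - trigB n x ^ r‖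
          ≤ ((r:ℝ) * 3^r * 16) * (2:ℝ)⁻¹^n := by
      intro x hx
      rw [Set.uIoc_of_le (by norm_num : (0:ℝ) ≤ 1)] at hx
      have hx' : x ∈ Set.Icc (0:ℝ) 1 := ⟨hx.1.le, hx.2⟩
      have htb := myTailBound n hn2 hx'
      set a : ℝ := |(2*π)^n * (bernPoly n x / (n.factorial:ℝ))| with hadef
      set b : ℝ := trigB n x with hbdef
      have hb3 : b ∈ Set.Icc (0:ℝ) 3 :=
        ⟨trigB_nonneg n x, (trigB_le_two n x).trans (by norm_num)⟩
      have ha3 : a ∈ Set.Icc (0:ℝ) 3 := by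
        constructor
        · exact abs_nonneg _
        · have h1 : a - b ≤ 16 * (2:ℝ)⁻¹^n := (abs_le.mp htb).2
          have h2 : b ≤ 2 := trigB_le_two n x
          linarith
      have hlip := myPowLip r ha3 hb3
      have habd : |a - b| ≤ 16 * (2:ℝ)⁻¹^n := htb
      rw [Real.norm_eq_abs]
      calc |a^r - b^r| ≤ (r:ℝ) * 3^r * |a - b| := hlip
      _ ≤ (r:ℝ) * 3^r * (16 * (2:ℝ)⁻¹^n) := by
            apply mul_le_mul_of_nonneg_left habd (by positivity)
      _ = ((r:ℝ) * 3^r * 16) * (2:ℝ)⁻¹^n := by ring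
    have hnorm := intervalIntegral.norm_integral_le_of_norm_le_const hptwise
    rw [hsub]
    simpa using hnorm
  have hIz : Tendsto (fun n : ℕ =>
      (∫ x in (0:ℝ)..1, |(2*π)^n * (bernPoly n x / (n.factorial:ℝ))|^r) - L)
      atTop (nhds 0) := by
    apply squeeze_zero_norm' hIL
    have h := tendsto_pow_atTop_nhds_zero_of_lt_one
      (by norm_num : (0:ℝ) ≤ 2⁻¹) (by norm_num : (2:ℝ)⁻¹ < 1)
    simpa using h.const_mul ((r:ℝ) * 3^r * 16)
  have hIt : Tendsto (fun n : ℕ =>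
      ∫ x in (0:ℝ)..1, |(2*π)^n * (bernPoly n x / (n.factorial:ℝ))|^r)
      atTop (nhds L) := by
    have := hIz.add_const L
    simpa using this
  -- identify the goal function
  have hEq : ∀ n : ℕ,
      (2*π)^n * (∫ x in (0:ℝ)..1, |bernPoly n x / (n.factorial:ℝ)|^(r:ℝ))^(1/(r:ℝ))
        = (∫ x in (0:ℝ)..1, |(2*π)^n * (bernPoly n x / (n.factorial:ℝ))|^r)^(1/(r:ℝ)) := by
    intro n
    have h2πn : (0:ℝ) ≤ (2*π)^n := by positivity
    have hconv : (∫ x in (0:ℝ)..1, |bernPoly n x / (n.factorial:ℝ)|^(r:ℝ))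
        = ∫ x in (0:ℝ)..1, |bernPoly n x / (n.factorial:ℝ)|^r :=
      intervalIntegral.integral_congr (fun x _ => Real.rpow_natCast _ r)
    have hJ0 : 0 ≤ ∫ x in (0:ℝ)..1, |bernPoly n x / (n.factorial:ℝ)|^r :=
      intervalIntegral.integral_nonneg (by norm_num) (fun u _ => by positivity)
    have hIn : (∫ x in (0:ℝ)..1, |(2*π)^n * (bernPoly n x / (n.factorial:ℝ))|^r)
        = ((2*π)^n)^r * ∫ x in (0:ℝ)..1, |bernPoly n x / (n.factorial:ℝ)|^r := by
      rw [← intervalIntegral.integral_const_mul]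
      apply intervalIntegral.integral_congr
      intro x _
      show |(2*π)^n * (bernPoly n x / (n.factorial:ℝ))|^r
          = ((2*π)^n)^r * |bernPoly n x / (n.factorial:ℝ)|^r
      rw [abs_mul, mul_pow, abs_of_nonneg h2πn]
    rw [hconv, hIn, Real.mul_rpow (by positivity) hJ0]
    congr 1
    rw [← Real.rpow_natCast ((2*π)^n) r, ← Real.rpow_mul h2πn, mul_one_div_cancel hr0,
      Real.rpow_one]
  -- final value
  have hval : 2 * ((((r - 1).doubleFactorial : ℝ)) / ((r.doubleFactorial : ℝ)))^(1/(r:ℝ))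
      = L^(1/(r:ℝ)) := by
    have h1 : r - 1 = 2*j+1 := by omega
    have h2 : (r.doubleFactorial : ℝ) = ((2*(j+1))‼ : ℝ) := by rw [hj]
    rw [h1, h2, hLdef, Real.mul_rpow (by positivity) hD0.le]
    congr 1
    rw [← Real.rpow_natCast (2:ℝ) r, ← Real.rpow_mul (by norm_num), mul_one_div_cancel hr0,
      Real.rpow_one]
  rw [hval]
  have hfin : Tendsto (fun n : ℕ =>
      (∫ x in (0:ℝ)..1, |(2*π)^n * (bernPoly n x / (n.factorial:ℝ))|^r)^(1/(r:ℝ)))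
      atTop (nhds (L^(1/(r:ℝ)))) := by
    have hca : ContinuousAt (fun y : ℝ => y ^ (1/(r:ℝ))) L :=
      Real.continuousAt_rpow_const L (1/(r:ℝ)) (Or.inl hL0.ne')
    exact hca.tendsto.comp hIt
  exact Tendsto.congr (fun n => (hEq n).symm) hfin
end
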